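/- The translation T : ℝ^d → ℝ^d given by T(x) = x + e₁, where e₁ is the first standard basis vector, does not have the topological shadowing property. -/

import Mathlib

open Metric Filter Topology

/-- `n`-fold composition of a homeomorphism, `n : ℕ`. -/
def hpow {X : Type*} [TopologicalSpace X] (f : X ≃ₜ X) : ℕ → X ≃ₜ X
  | 0 => Homeomorph.refl X
  | n + 1 => (hpow f n).trans f

/-- `n`-th iterate of a homeomorphism, `n : ℤ` (negative powers use the inverse). -/
def hzpow {X : Type*} [TopologicalSpace X] (f : X ≃ₜ X) : ℤ → X ≃ₜ X
  | Int.ofNat n => hpow f n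
  | Int.negSucc n => (hpow f (n + 1)).symm

/-- `(xₙ)ₙ∈ℤ` is a `δ`-pseudo-orbit for `f`: `d(f(xₙ), xₙ₊₁) < δ(f(xₙ))` for all `n`. -/
def IsPseudoOrbit {X : Type*} [MetricSpace X] (f : X → X) (δ : X → ℝ) (x : ℤ → X) : Prop :=
  ∀ n : ℤ, dist (f (x n)) (x (n + 1)) < δ (f (x n))

/-- Topological shadowing property (strict shadowing inequality). -/
def TSP {X : Type*} [MetricSpace X] (f : X ≃ₜ X) : Prop :=
  ∀ ε : X → ℝ, Continuous ε → (∀ p, 0 < ε p) →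
    ∃ δ : X → ℝ, Continuous δ ∧ (∀ p, 0 < δ p) ∧
      ∀ x : ℤ → X, IsPseudoOrbit f δ x →
        ∃ y : X, ∀ n : ℤ, dist (hzpow f n y) (x n) < ε (x n)

lemma hpow_addRight {E : Type*} [AddCommGroup E] [TopologicalSpace E] [ContinuousAdd E]
    (v : E) (n : ℕ) (y : E) : hpow (Homeomorph.addRight v) n y = y + n • v := by
  induction n with
  | zero => simp [hpow]
  | succ n ih => simp [hpow, ih, succ_nsmul, add_assoc]

lemma hzpow_addRight {E : Type*} [AddCommGroup E] [TopologicalSpace E] [ContinuousAdd E]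
    (v : E) (n : ℤ) (y : E) : hzpow (Homeomorph.addRight v) n y = y + n • v := by
  cases n with
  | ofNat n =>
      show hpow (Homeomorph.addRight v) n y = _
      rw [hpow_addRight]
      simp
  | negSucc n =>
      have hrfl : hzpow (Homeomorph.addRight v) (Int.negSucc n) y
          = (hpow (Homeomorph.addRight v) (n + 1)).symm y := rfl
      rw [hrfl]
      apply (hpow (Homeomorph.addRight v) (n + 1)).injective
      rw [Homeomorph.apply_symm_apply, hpow_addRight, negSucc_zsmul]
      abel

/-- The translation `x ↦ x + e₁` of `ℝ^d` does not have the topological shadowing property. -/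
theorem translation_not_TSP (d : ℕ) (hd : 0 < d) :
    ¬ TSP (Homeomorph.addRight (EuclideanSpace.single (⟨0, hd⟩ : Fin d) (1 : ℝ))) := by
  set i : Fin d := ⟨0, hd⟩
  set e : EuclideanSpace ℝ (Fin d) := EuclideanSpace.single i (1 : ℝ) with he
  intro h
  obtain ⟨δ, hδc, hδpos, hδ⟩ := h (fun p => Real.exp (-|p i|))
    (Real.continuous_exp.comp ((continuous_abs.comp ((continuous_apply i).comp (PiLp.continuous_ofLp 2 _))).neg))
    (fun p => Real.exp_pos _)
  set η : ℝ := δ e / 2 with hηdef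
  have hηpos : 0 < η := half_pos (hδpos e)
  have hηlt : η < δ e := half_lt_self (hδpos e)
  set x : ℤ → EuclideanSpace ℝ (Fin d) :=
    fun n => if n ≤ 0 then ((n : ℝ)) • e else ((n : ℝ) + η) • e with hx
  have happ : ∀ c : ℝ, ((c • e : EuclideanSpace ℝ (Fin d)) i) = c := by
    intro c
    simp [he, EuclideanSpace.single_apply]
  have hnorm : ∀ c : ℝ, ‖(c • e : EuclideanSpace ℝ (Fin d))‖ = |c| := by
    intro c
    rw [norm_smul, he, EuclideanSpace.norm_single]
    simp
  have hdist : ∀ a b : ℝ, dist (a • e) (b • e) = |a - b| := by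
    intro a b
    rw [dist_eq_norm, ← sub_smul, hnorm]
  have hsmul_add : ∀ c : ℝ, c • e + e = (c + 1) • e := by
    intro c
    rw [add_smul, one_smul]
  have hpo : IsPseudoOrbit (Homeomorph.addRight e) δ x := by
    intro n
    have hfx : (Homeomorph.addRight e) (x n) = x n + e := rfl
    rcases lt_trichotomy n 0 with hn | hn | hn
    · have h0 : n ≤ 0 := hn.le
      have h1 : n + 1 ≤ 0 := hn
      have hxe : x n + e = x (n + 1) := by
        simp only [hx, if_pos h0, if_pos h1, hsmul_add]
        congr 1
        push_cast
        ring
      rw [hfx, hxe, dist_self]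
      exact hδpos _
    · subst hn
      have hx0 : x 0 + e = e := by
        simp [hx]
      have hx1 : x (0 + 1) = (1 + η) • e := by
        norm_num [hx]
      rw [hfx, hx0, hx1]
      have : dist e ((1 + η) • e) = η := by
        nth_rewrite 1 [show (e : EuclideanSpace ℝ (Fin d)) = (1 : ℝ) • e from (one_smul ℝ e).symm]
        rw [hdist]
        rw [abs_of_nonpos (by linarith)]
        ring
      rw [this]
      exact hηlt
    · have h0 : ¬ n ≤ 0 := by omega
      have h1 : ¬ n + 1 ≤ 0 := by omega
      have hxe : x n + e = x (n + 1) := by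
        simp only [hx, if_neg h0, if_neg h1, hsmul_add]
        congr 1
        push_cast
        ring
      rw [hfx, hxe, dist_self]
      exact hδpos _
  obtain ⟨y, hy⟩ := hδ x hpo
  have hy' : ∀ n : ℤ, dist (y + ((n : ℝ)) • e) (x n) < Real.exp (-|(x n) i|) := by
    intro n
    have := hy n
    rwa [hzpow_addRight, ← Int.cast_smul_eq_zsmul ℝ] at this
  have texp : Tendsto (fun m : ℕ => Real.exp (-(m : ℝ))) atTop (𝓝 0) :=
    Real.tendsto_exp_atBot.comp (tendsto_neg_atTop_atBot.comp tendsto_natCast_atTop_atTop)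
  have hy0 : ∀ m : ℕ, ‖y‖ ≤ Real.exp (-(m : ℝ)) := by
    intro m
    have h := hy' (-(m : ℤ))
    have hle : (-(m : ℤ)) ≤ 0 := by omega
    simp only [hx, if_pos hle] at h
    rw [happ, dist_eq_norm, add_sub_cancel_right] at h
    push_cast at h
    rw [abs_neg, abs_of_nonneg (Nat.cast_nonneg m)] at h
    exact h.le
  have hyz : y = 0 := norm_le_zero_iff.mp (ge_of_tendsto' texp hy0)
  obtain ⟨m, hm2, hm1⟩ := ((texp.eventually_lt_const hηpos).and (eventually_ge_atTop 1)).exists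
  have h := hy' (m : ℤ)
  have h0 : ¬ (m : ℤ) ≤ 0 := by omega
  simp only [hx, if_neg h0] at h
  rw [happ, hyz, zero_add, hdist] at h
  have habs : |((m : ℤ) : ℝ) - (((m : ℤ) : ℝ) + η)| = η := by
    rw [abs_of_nonpos (by linarith)]
    ring
  rw [habs] at h
  have hmpos : (0 : ℝ) ≤ (m : ℝ) := Nat.cast_nonneg m
  have habs2 : |((m : ℤ) : ℝ) + η| = (m : ℝ) + η := by
    push_cast
    rw [abs_of_nonneg (by linarith)]
  rw [habs2] at h
  have : Real.exp (-((m : ℝ) + η)) ≤ Real.exp (-(m : ℝ)) := by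
    apply Real.exp_le_exp.mpr
    linarith
  linarith
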